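/- (Verification of solution (4.1.2).) Let a, b, c, d ∈ ℝ with c ≠ 0, let λ > 0, σ ≠ 0, m ∈ (0,1], and ε ∈ {1, −1}. Assume 8ac + σ²(b−2d)² > 0, and set R = √(8ac + σ²(b−2d)²). Assume moreover σ(b+2d) + εR ≠ 0 and 4ac + σ²(b²+4d²) + εσ(b+2d)R ≠ 0. Let j0, j2, k0, k2 be given by the formulas of solution (4.1.2), and set j1 = k1 = 0. Then λ, m, σ, j0, j1, j2, k0, k1, k2 satisfy all eight equations of the coefficient system (coeffs 1). -/

import Mathlib

set_option maxHeartbeats 1000000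

/-- verification that the explicit parameters of solution (4.1.2)
(with `j1 = k1 = 0`) satisfy all eight equations of the coefficient system (coeffs 1). -/
theorem abcd_solution_4_1_2_verification
    (a b c d lam m σ ε : ℝ)
    (hc : c ≠ 0) (hlam : 0 < lam) (hσ : σ ≠ 0) (hm : m ∈ Set.Ioc (0 : ℝ) 1)
    (hε : ε = 1 ∨ ε = -1)
    (hpos : 8*a*c + σ^2*(b - 2*d)^2 > 0)
    (R : ℝ) (hR : R = Real.sqrt (8*a*c + σ^2*(b - 2*d)^2))
    (hden1 : σ*(b + 2*d) + ε*R ≠ 0)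
    (hden2 : 4*a*c + σ^2*(b^2 + 4*d^2) + ε*σ*(b + 2*d)*R ≠ 0)
    (j0 j1 j2 k0 k1 k2 : ℝ)
    (hj1 : j1 = 0) (hk1 : k1 = 0)
    (hj2 : j2 = (3*lam^2*m^2/(2*c)) * (4*a*c + b*σ^2*(b - 2*d) + ε*b*σ*R))
    (hk2 : k2 = 3*lam^2*m^2 * (σ*(b + 2*d) + ε*R))
    (hk0 : k0 = (-8*b^2*c*lam^2*m^2*σ^2 - 32*c*d^2*lam^2*m^2*σ^2 - 32*a*c^2*lam^2*m^2
        + 4*b^2*c*lam^2*σ^2 + 16*c*d^2*lam^2*σ^2 + 16*a*c^2*lam^2 - b^2*σ^2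
        + 2*b*c*σ^2 + 2*b*d*σ^2 + 4*c*d*σ^2 - 4*a*c
        - ε*σ*R*(8*b*c*lam^2*m^2 + 16*c*d*lam^2*m^2 - 4*b*c*lam^2 - 8*c*d*lam^2
          + b - 2*c))
        / (2*c*(σ*(b + 2*d) + ε*R)))
    (hj0 : j0 = (-8*b^4*c*lam^2*m^2*σ^4 + 16*b^3*c*d*lam^2*m^2*σ^4
        - 64*a*b^2*c^2*lam^2*m^2*σ^2 - 32*a*b*c^2*d*lam^2*m^2*σ^2
        - 64*a*c^2*d^2*lam^2*m^2*σ^2 + 4*b^4*c*lam^2*σ^4 - 8*b^3*c*d*lam^2*σ^4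
        - 64*a^2*c^3*lam^2*m^2 + 32*a*b^2*c^2*lam^2*σ^2 + 16*a*b*c^2*d*lam^2*σ^2
        + 32*a*c^2*d^2*lam^2*σ^2 + b^4*σ^4 - 4*b^3*d*σ^4 + 4*b^2*d^2*σ^4
        + 32*a^2*c^3*lam^2 + 8*a*b^2*c*σ^2 - 8*a*b*c*d*σ^2 - 4*b^2*c^2*σ^2
        - 16*c^2*d^2*σ^2 + 8*a^2*c^2 - 16*a*c^3
        - ε*σ*R*(8*b^3*c*lam^2*m^2*σ^2 + 32*a*b*c^2*lam^2*m^2 + 32*a*c^2*d*lam^2*m^2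
          - 4*b^3*c*lam^2*σ^2 - 16*a*b*c^2*lam^2 - 16*a*c^2*d*lam^2 - b^3*σ^2
          + 2*b^2*d*σ^2 - 4*a*b*c + 4*b*c^2 + 8*c^2*d))
        / (4*c^2*(4*a*c + σ^2*(b^2 + 4*d^2) + ε*σ*(b + 2*d)*R))) :
    (-24*b*lam^2*m^2*σ*j2 - 24*a*lam^2*m^2*k2 + 4*j2*k2 = 0) ∧
    (-6*b*lam^2*m^2*σ*j1 - 6*a*lam^2*m^2*k1 + 3*j1*k2 + 3*j2*k1 = 0) ∧
    (16*b*lam^2*m^2*σ*j2 + 16*a*lam^2*m^2*k2 - 8*b*lam^2*σ*j2 - 8*a*lam^2*k2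
      - 2*σ*j2 + 2*j0*k2 + 2*j1*k1 + 2*j2*k0 + 2*k2 = 0) ∧
    (2*b*lam^2*m^2*σ*j1 + 2*a*lam^2*m^2*k1 - b*lam^2*σ*j1 - a*lam^2*k1
      - σ*j1 + j0*k1 + j1*k0 + k1 = 0) ∧
    (-24*d*lam^2*m^2*σ*k2 - 24*c*lam^2*m^2*j2 + 2*k2^2 = 0) ∧
    (-6*d*lam^2*m^2*σ*k1 - 6*c*lam^2*m^2*j1 + 3*k1*k2 = 0) ∧
    (16*d*lam^2*m^2*σ*k2 + 16*c*lam^2*m^2*j2 - 8*d*lam^2*σ*k2 - 8*c*lam^2*j2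
      - 2*σ*k2 + 2*k0*k2 + k1^2 + 2*j2 = 0) ∧
    (2*d*lam^2*m^2*σ*k1 + 2*c*lam^2*m^2*j1 - d*lam^2*σ*k1 - c*lam^2*j1
      - σ*k1 + k0*k1 + j1 = 0) := by
  have hq : R^2 = 8*a*c + σ^2*(b - 2*d)^2 := by
    rw [hR, Real.sq_sqrt hpos.le]
  clear hR
  subst hj1 hk1 hj2 hk2 hk0 hj0
  rcases hε with rfl | rfl
  · have hd1 : σ*(b + 2*d) + R ≠ 0 := by intro h; exact hden1 (by linarith)
    have hd2 : 4*a*c + σ^2*(b^2 + 4*d^2) + σ*(b + 2*d)*R ≠ 0 := by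
      intro h; exact hden2 (by linarith)
    refine ⟨?_, by ring, ?_, by ring, ?_, by ring, ?_, by ring⟩
    · field_simp [hd1, hd2]
      linear_combination ((36:ℝ)*b*lam^4*m^4*σ) * hq
    · have hd2n : c*4*a + σ^2*(b^2+4*d^2) + σ*R*(b+2*d) ≠ 0 := by intro h; exact hd2 (by linarith)
      field_simp
      linear_combination ((384:ℝ)*a*c^2*d*lam^4*m^4*σ*R + (-192:ℝ)*a*c^2*d*lam^4*m^2*σ*R + (-48:ℝ)*b^2*d*lam^2*m^2*σ^3*R + (48:ℝ)*a*b*c*lam^2*m^2*σ*R + (-384:ℝ)*b*c*d^2*lam^4*m^4*σ^3*R + (192:ℝ)*b*c*d^2*lam^4*m^2*σ^3*R + (-1152:ℝ)*a*b*c^2*d*lam^4*m^4*σ^2 + (576:ℝ)*a*b*c^2*d*lam^4*m^2*σ^2 + (48:ℝ)*a*b^2*c*lam^2*m^2*σ^2 + (384:ℝ)*b^2*c*d^2*lam^4*m^4*σ^4 + (768:ℝ)*a*c^2*d^2*lam^4*m^4*σ^2 + (-192:ℝ)*b^2*c*d^2*lam^4*m^2*σ^4 + (-384:ℝ)*a*c^2*d^2*lam^4*m^2*σ^2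 + (-96:ℝ)*a*b*c*d*lam^2*m^2*σ^2 + (768:ℝ)*a^2*c^3*lam^4*m^4 + (-384:ℝ)*a^2*c^3*lam^4*m^2 + (-48:ℝ)*b^3*d*lam^2*m^2*σ^4 + (96:ℝ)*a^2*c^2*lam^2*m^2 + (-768:ℝ)*b*c*d^3*lam^4*m^4*σ^4 + (384:ℝ)*b*c*d^3*lam^4*m^2*σ^4) * hq
    · field_simp [hd1, hd2]
      linear_combination ((36:ℝ)*lam^4*m^4) * hq
    · have hd1n : σ*(b+d*2) + R ≠ 0 := by intro h; exact hd1 (by linarith)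
      field_simp
      linear_combination ((0:ℝ)) * hq
  · have hd1 : σ*(b + 2*d) - R ≠ 0 := by intro h; exact hden1 (by linarith)
    have hd2 : 4*a*c + σ^2*(b^2 + 4*d^2) - σ*(b + 2*d)*R ≠ 0 := by
      intro h; exact hden2 (by linarith)
    have hd1' : σ*(b + 2*d) + -R ≠ 0 := by intro h; exact hden1 (by linarith)
    have hd2' : 4*a*c + σ^2*(b^2 + 4*d^2) + -(σ*(b + 2*d)*R) ≠ 0 := by
      intro h; exact hden2 (by linarith)
    refine ⟨?_, by ring, ?_, by ring, ?_, by ring, ?_, by ring⟩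
    · field_simp [hd1', hd2', hd1, hd2]
      linear_combination ((36:ℝ)*b*lam^4*m^4*σ) * hq
    · have hd2n : c*4*a + σ^2*(b^2+4*d^2) + -(σ*R*(b+2*d)) ≠ 0 := by intro h; exact hd2 (by linarith)
      field_simp
      linear_combination ((-384:ℝ)*a*c^2*d*lam^4*m^4*σ*R + (192:ℝ)*a*c^2*d*lam^4*m^2*σ*R + (48:ℝ)*b^2*d*lam^2*m^2*σ^3*R + (-48:ℝ)*a*b*c*lam^2*m^2*σ*R + (384:ℝ)*b*c*d^2*lam^4*m^4*σ^3*R + (-192:ℝ)*b*c*d^2*lam^4*m^2*σ^3*R + (-1152:ℝ)*a*b*c^2*d*lam^4*m^4*σ^2 + (576:ℝ)*a*b*c^2*d*lam^4*m^2*σ^2 + (48:ℝ)*a*b^2*c*lam^2*m^2*σ^2 + (384:ℝ)*b^2*c*d^2*lam^4*m^4*σ^4 + (768:ℝ)*a*c^2*d^2*lam^4*m^4*σ^2 + (-192:ℝ)*b^2*c*d^2*lam^4*m^2*σ^4 + (-384:ℝ)*a*c^2*d^2*lam^4*m^2*σ^2 + (-96:ℝ)*a*b*c*d*lam^2*m^2*σ^2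 + (768:ℝ)*a^2*c^3*lam^4*m^4 + (-384:ℝ)*a^2*c^3*lam^4*m^2 + (-48:ℝ)*b^3*d*lam^2*m^2*σ^4 + (96:ℝ)*a^2*c^2*lam^2*m^2 + (-768:ℝ)*b*c*d^3*lam^4*m^4*σ^4 + (384:ℝ)*b*c*d^3*lam^4*m^2*σ^4) * hq
    · field_simp [hd1', hd2', hd1, hd2]
      linear_combination ((36:ℝ)*lam^4*m^4) * hq
    · have hd1n : σ*(b+d*2) + -R ≠ 0 := by intro h; exact hd1 (by linarith)
      field_simp
      linear_combination ((0:ℝ)) * hq
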